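/- Let q = 3, F₀ ≡ 0, and suppose 2T − |F₃|² ≤ 0 pointwise on M, with all fluxes F_p for p ∉ {1,3,5} vanishing. Then for any smooth positive functions u, v on M, the integrand (u²/2) Σ_{p} (1−p) v^{3−p} |F_p|² + ((7−q)/2) u² v^{(q−3)/2} T is pointwise ≤ 0; consequently, if the identity of Lemma (identity_al_be_vol) holds, then 4α/G_N + 6β Vol(M) ≤ 0. -/
import Mathlib


open MeasureTheory

/-- With `q = 3`, `F₀ ≡ 0`, fluxes only `F₁, F₃, F₅`, and
`2T − |F₃|² ≤ 0` pointwise, the integrand of Lemma (identity_al_be_vol) is pointwise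
`≤ 0`; hence if the identity of that lemma holds then `4α/G_N + 6β Vol(M) ≤ 0`. -/
theorem nonpositive_integrand_q3
    {M : Type*} [MeasurableSpace M] (μ : Measure M) [IsFiniteMeasure μ]
    (u v : M → ℝ) (hu : ∀ x, 0 < u x) (hv : ∀ x, 0 < v x)
    (T F1sq F3sq F5sq : M → ℝ)
    (hT : ∀ x, 0 ≤ T x) (hF1 : ∀ x, 0 ≤ F1sq x) (hF3 : ∀ x, 0 ≤ F3sq x)
    (hF5 : ∀ x, 0 ≤ F5sq x)
    (hbal : ∀ x, 2 * T x - F3sq x ≤ 0)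
    (α β GN Vol : ℝ) (hGN : 0 < GN) (hVol : 0 < Vol) :
    (∀ x,
      ((u x) ^ 2 / 2) *
          (((1 : ℝ) - 1) * (v x) ^ ((3 : ℝ) - 1) * F1sq x
            + ((1 : ℝ) - 3) * (v x) ^ ((3 : ℝ) - 3) * F3sq x
            + ((1 : ℝ) - 5) * (v x) ^ ((3 : ℝ) - 5) * F5sq x)
        + (((7 : ℝ) - 3) / 2) * (u x) ^ 2 * (v x) ^ (((3 : ℝ) - 3) / 2) * T x ≤ 0) ∧
    ((4 * α / GN + 6 * β * Vol =
        ∫ x, (((u x) ^ 2 / 2) *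
          (((1 : ℝ) - 1) * (v x) ^ ((3 : ℝ) - 1) * F1sq x
            + ((1 : ℝ) - 3) * (v x) ^ ((3 : ℝ) - 3) * F3sq x
            + ((1 : ℝ) - 5) * (v x) ^ ((3 : ℝ) - 5) * F5sq x)
          + (((7 : ℝ) - 3) / 2) * (u x) ^ 2 * (v x) ^ (((3 : ℝ) - 3) / 2) * T x) ∂μ) →
      4 * α / GN + 6 * β * Vol ≤ 0) := by
  have key : ∀ x,
      ((u x) ^ 2 / 2) *
          (((1 : ℝ) - 1) * (v x) ^ ((3 : ℝ) - 1) * F1sq x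
            + ((1 : ℝ) - 3) * (v x) ^ ((3 : ℝ) - 3) * F3sq x
            + ((1 : ℝ) - 5) * (v x) ^ ((3 : ℝ) - 5) * F5sq x)
        + (((7 : ℝ) - 3) / 2) * (u x) ^ 2 * (v x) ^ (((3 : ℝ) - 3) / 2) * T x ≤ 0 := by
    intro x
    have hv0 : (0:ℝ) < v x := hv x
    have h1 : ((3:ℝ) - 3) = 0 := by norm_num
    have h2 : (((3:ℝ) - 3) / 2) = 0 := by norm_num
    rw [h2, h1, Real.rpow_zero]
    have hvp : (0:ℝ) < (v x) ^ ((3:ℝ) - 5) := Real.rpow_pos_of_pos hv0 _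
    have hu2 : (0:ℝ) ≤ (u x) ^ 2 := sq_nonneg _
    have hA : (u x) ^ 2 * (2 * T x - F3sq x) ≤ 0 :=
      mul_nonpos_of_nonneg_of_nonpos hu2 (hbal x)
    have hB : (0:ℝ) ≤ (u x) ^ 2 * ((v x) ^ ((3:ℝ) - 5) * F5sq x) :=
      mul_nonneg hu2 (mul_nonneg hvp.le (hF5 x))
    have := hA; have := hB; ring_nf; ring_nf at hA hB ⊢; linarith [hA, hB]
  refine ⟨key, fun h => ?_⟩
  rw [h]
  exact integral_nonpos key
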